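/- Let a ∈ ℝ and b < 0, and define Q(p) = (a + b·log p)/p for p in the interval (0, e^{−a/b}), on which a + b·log p > 0. Then for every p ∈ (0, e^{−a/b}), the curvature κ(p) := Q″(p)·Q(p)/Q′(p)² equals 2 + b·(a − 2b + b·log p)/(a − b + b·log p)², and κ is strictly decreasing on (0, e^{−a/b}). -/

import Mathlib

/-- Single-product AIDS demand `Q(p) = (a + b·log p)/p`. -/
noncomputable def Qaids (a b : ℝ) (p : ℝ) : ℝ := (a + b * Real.log p) / p

/-- Curvature of AIDS demand: `κ(p) = Q''(p)·Q(p)/Q'(p)²`. -/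
noncomputable def κaids (a b : ℝ) (p : ℝ) : ℝ :=
  deriv (deriv (Qaids a b)) p * Qaids a b p / (deriv (Qaids a b) p) ^ 2

lemma hQd (a b : ℝ) {p : ℝ} (hp : 0 < p) :
    HasDerivAt (Qaids a b) ((b - a - b * Real.log p) / p ^ 2) p := by
  have h1 : HasDerivAt (fun x => a + b * Real.log x) (b / p) p := by
    simpa [mul_div_assoc, div_eq_mul_inv] using
      (((Real.hasDerivAt_log hp.ne').const_mul b).const_add a)
  have := h1.div (hasDerivAt_id p) hp.ne'
  refine this.congr_deriv ?_
  simp only [id]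
  have hp' := hp.ne'
  field_simp
  ring

lemma deriv_Q_eq (a b : ℝ) {p : ℝ} (hp : 0 < p) :
    deriv (Qaids a b) p = (b - a - b * Real.log p) / p ^ 2 := (hQd a b hp).deriv

lemma deriv2_Q_eq (a b : ℝ) {p : ℝ} (hp : 0 < p) :
    deriv (deriv (Qaids a b)) p = (2 * a - 3 * b + 2 * b * Real.log p) / p ^ 3 := by
  have hev : deriv (Qaids a b) =ᶠ[nhds p]
      (fun x => (b - a - b * Real.log x) / x ^ 2) := by
    filter_upwards [isOpen_Ioi.mem_nhds hp] with x hx using deriv_Q_eq a b hx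
  rw [hev.deriv_eq]
  have h1 : HasDerivAt (fun x => b - a - b * Real.log x) (-(b / p)) p := by
    simpa [mul_div_assoc, div_eq_mul_inv, sub_eq_add_neg] using
      (((Real.hasDerivAt_log hp.ne').const_mul b).const_add (b - a - (b - a))).neg.const_add (b - a)
  have h2 : HasDerivAt (fun x : ℝ => x ^ 2) (2 * p) p := by
    simpa using (hasDerivAt_pow 2 p)
  have h := h1.div h2 (by positivity)
  rw [show (fun x => (b - a - b * Real.log x) / x ^ 2) = ((fun x => b - a - b * Real.log x) / fun x => x ^ 2) from rfl, h.deriv]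
  field_simp
  ring

lemma kappa_eq (a b : ℝ) (hb : b < 0) {p : ℝ} (hp : 0 < p)
    (hu : 0 < a + b * Real.log p) :
    κaids a b p =
      2 + b * (a - 2 * b + b * Real.log p) / (a - b + b * Real.log p) ^ 2 := by
  have hden : a + b * Real.log p - b > 0 := by linarith
  rw [κaids, deriv_Q_eq a b hp, deriv2_Q_eq a b hp, Qaids]
  have hp' : p ≠ 0 := hp.ne'
  have h1 : b - a - b * Real.log p ≠ 0 := by nlinarith
  have h2 : a - b + b * Real.log p ≠ 0 := by nlinarith
  field_simp
  ring

theorem stmt19 (a b : ℝ) (hb : b < 0) :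
    (∀ p ∈ Set.Ioo (0 : ℝ) (Real.exp (-a / b)), 0 < a + b * Real.log p) ∧
    (∀ p ∈ Set.Ioo (0 : ℝ) (Real.exp (-a / b)),
      κaids a b p =
        2 + b * (a - 2 * b + b * Real.log p) / (a - b + b * Real.log p) ^ 2) ∧
    StrictAntiOn (κaids a b) (Set.Ioo (0 : ℝ) (Real.exp (-a / b))) := by
  have hpos : ∀ p ∈ Set.Ioo (0 : ℝ) (Real.exp (-a / b)), 0 < a + b * Real.log p := by
    rintro p ⟨hp0, hpe⟩
    have hlog : Real.log p < -a / b := by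
      have := Real.log_lt_log hp0 hpe
      rwa [Real.log_exp] at this
    have : b * (-a / b) < b * Real.log p := by
      exact (mul_lt_mul_left_of_neg hb).mpr hlog
    have h0 : b * (-a / b) = -a := by
      rw [mul_div_assoc', mul_comm, mul_div_assoc, div_self hb.ne, mul_one]
    rw [h0] at this
    linarith
  refine ⟨hpos, fun p hp => kappa_eq a b hb hp.1 (hpos p hp), ?_⟩
  intro p hp q hq hpq
  rw [kappa_eq a b hb hp.1 (hpos p hp), kappa_eq a b hb hq.1 (hpos q hq)]
  set u := a + b * Real.log p with hu
  set v := a + b * Real.log q with hv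
  have hupos : 0 < u := hpos p hp
  have hvpos : 0 < v := hpos q hq
  have huv : v < u := by
    have : Real.log p < Real.log q := Real.log_lt_log hp.1 hpq
    have := (mul_lt_mul_left_of_neg hb).mpr this
    simp only [hu, hv]; linarith
  have hub : 0 < u - b := by linarith
  have hvb : 0 < v - b := by linarith
  have h7 : 0 < u * v - 2 * b * (u + v) + 3 * b ^ 2 := by
    nlinarith [mul_pos hupos hvpos, mul_pos (neg_pos.mpr hb) (add_pos hupos hvpos), sq_nonneg b]
  have key : b * (v - 2 * b) * (u - b) ^ 2 < b * (u - 2 * b) * (v - b) ^ 2 := by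
    nlinarith [mul_pos (mul_pos (neg_pos.mpr hb) (sub_pos.mpr huv)) h7]
  have hq2 : (0:ℝ) < (v - b) ^ 2 := by positivity
  have hp2 : (0:ℝ) < (u - b) ^ 2 := by positivity
  have h3 : a - 2 * b + b * Real.log q = v - 2 * b := by rw [hv]; ring
  have h4 : a - 2 * b + b * Real.log p = u - 2 * b := by rw [hu]; ring
  have h5 : a - b + b * Real.log q = v - b := by rw [hv]; ring
  have h6 : a - b + b * Real.log p = u - b := by rw [hu]; ring
  rw [h3, h4, h5, h6]
  have : b * (v - 2 * b) / (v - b) ^ 2 < b * (u - 2 * b) / (u - b) ^ 2 := by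
    rw [div_lt_div_iff₀ hq2 hp2]
    linarith [key]
  linarith [this]
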